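/- Let κ be a regular uncountable cardinal and ⟨λ_j : j < κ⟩ a strictly increasing sequence of infinite cardinals with κ < λ_0, and let the levels 𝒯_i (i < κ) of the tree 𝒯 be defined as in the context. For i < κ and α ≤ λ_i, set 𝒯_{i,α} = {η ∈ 𝒯_i : η(i,1) ≤ α}. Then for every i < κ and every ordinal α < λ_i, the truncated level 𝒯_{i,α} has cardinality strictly less than λ_i. -/

import Mathlib

open Cardinal

/-- `η`, a function on `{j | j ≤ i}` with values `η(j) = (η(j,1), η(j,2))`, is a node
of the `i`-th level `𝒯_i` of the tree `𝒯`: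
(c) `η(j,1) < λ_j` and `η(j,2) < κ`;
(d) both coordinates are nondecreasing;
(e) `η` has finitely many values;
(f) if `j₁ < j₂ ≤ i` and the first coordinate is constant on `[j₁, j₂]`, then
    `j₂ < η(j₁,2)`. -/
def LevelFn (lam : Ordinal → Ordinal) (κ i : Ordinal)
    (η : ↥(Set.Iic i) → Ordinal × Ordinal) : Prop :=
  (∀ j : ↥(Set.Iic i), (η j).1 < lam j.1 ∧ (η j).2 < κ) ∧
  (∀ j₁ j₂ : ↥(Set.Iic i), (j₁ : Ordinal) < (j₂ : Ordinal) →
    (η j₁).1 ≤ (η j₂).1 ∧ (η j₁).2 ≤ (η j₂).2) ∧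
  (Set.range η).Finite ∧
  (∀ j₁ j₂ : ↥(Set.Iic i), (j₁ : Ordinal) < (j₂ : Ordinal) →
    (∀ j : ↥(Set.Iic i), (j₁ : Ordinal) ≤ (j : Ordinal) → (j : Ordinal) ≤ (j₂ : Ordinal) →
      (η j).1 = (η j₁).1) →
    (j₂ : Ordinal) < (η j₁).2)

namespace Stmt8Aux

variable {i : Ordinal.{0}}

/-- The set of "breakpoints" of `η`: pairs `(j, v)` where `j` is the least point at which
`η` takes the value `v`. -/
def brk (η : ↥(Set.Iic i) → Ordinal × Ordinal) : Set (↥(Set.Iic i) × Ordinal × Ordinal) :=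
  {p | η p.1 = p.2 ∧ ∀ j' : ↥(Set.Iic i), j' < p.1 → η j' ≠ p.2}

lemma brk_finite (η : ↥(Set.Iic i) → Ordinal × Ordinal) (hfin : (Set.range η).Finite) :
    (brk η).Finite := by
  apply Set.Finite.of_finite_image (f := Prod.snd)
  · exact hfin.subset (by rintro v ⟨⟨jj, vv⟩, ⟨h1, _⟩, rfl⟩; exact ⟨jj, h1⟩)
  · rintro ⟨j, v⟩ ⟨h1, h2⟩ ⟨j', v'⟩ ⟨h1', h2'⟩ (hv : v = v')
    subst hv
    rcases lt_trichotomy j j' with h | h | h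
    · exact absurd h1 (h2' j h)
    · rw [h]
    · exact absurd h1' (h2 j' h)

lemma exists_min (η : ↥(Set.Iic i) → Ordinal × Ordinal) (j : ↥(Set.Iic i)) :
    ∃ j₀, j₀ ≤ j ∧ (j₀, η j) ∈ brk η := by
  obtain ⟨j₀, (hj₀ : η j₀ = η j), hmin⟩ :=
    (wellFounded_lt (α := ↥(Set.Iic i))).has_min {j' | η j' = η j} ⟨j, rfl⟩
  exact ⟨j₀, not_lt.1 fun h => hmin j rfl h, hj₀, fun j' h hne => hmin j' hne h⟩

lemma eq_of_brk_eq (η η' : ↥(Set.Iic i) → Ordinal × Ordinal)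
    (hm : ∀ j₁ j₂ : ↥(Set.Iic i), j₁ ≤ j₂ → (η j₁).1 ≤ (η j₂).1 ∧ (η j₁).2 ≤ (η j₂).2)
    (hm' : ∀ j₁ j₂ : ↥(Set.Iic i), j₁ ≤ j₂ → (η' j₁).1 ≤ (η' j₂).1 ∧ (η' j₁).2 ≤ (η' j₂).2)
    (h : brk η = brk η') : η = η' := by
  funext j
  obtain ⟨j₁, hj₁le, hj₁⟩ := exists_min η j
  obtain ⟨j₂, hj₂le, hj₂⟩ := exists_min η' j
  have hj₁' : (j₁, η j) ∈ brk η' := h ▸ hj₁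
  have hj₂' : (j₂, η' j) ∈ brk η := h ▸ hj₂
  have h1 : η' j₁ = η j := hj₁'.1
  have h2 : η j₂ = η' j := hj₂'.1
  have h3 : η j₁ = η j := hj₁.1
  have h4 : η' j₂ = η' j := hj₂.1
  rcases le_total j₁ j₂ with hle | hle
  · -- η j₁ ≤ η j₂ ≤ η j = η j₁ componentwise, so η j₂ = η j
    have a1 := hm j₁ j₂ hle
    have a2 := hm j₂ j hj₂le
    rw [← h2]
    ext
    · exact le_antisymm (by rw [← h3]; exact a1.1) a2.1
    · exact le_antisymm (by rw [← h3]; exact a1.2) a2.2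
  · have a1 := hm' j₂ j₁ hle
    have a2 := hm' j₁ j hj₁le
    rw [← h1]
    ext
    · exact le_antisymm a2.1 (by rw [← h4]; exact a1.1)
    · exact le_antisymm a2.2 (by rw [← h4]; exact a1.2)

end Stmt8Aux

/-- **The truncated levels `𝒯_{i,α} = {η ∈ 𝒯_i : η(i,1) ≤ α}` are small** (Remark 2.8):
for a regular uncountable cardinal `κ`, a strictly increasing sequence
`⟨λ_j : j < κ⟩` of infinite cardinals with `κ < λ_0`, every `i < κ` and every
`α < λ_i`, the set `𝒯_{i,α}` has cardinality `< λ_i`. -/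


theorem stmt8 (κ : Cardinal.{0}) (hκreg : κ.IsRegular) (hκunc : ℵ₀ < κ)
    (lam : Ordinal.{0} → Cardinal.{0})
    (hmono : StrictMonoOn lam (Set.Iio κ.ord))
    (hinf : ∀ j < κ.ord, ℵ₀ ≤ lam j)
    (hκ0 : κ < lam 0)
    (i α : Ordinal.{0}) (hi : i < κ.ord) (hα : α < (lam i).ord) :
    #{η : ↥(Set.Iic i) → Ordinal × Ordinal //
        LevelFn (fun j => (lam j).ord) κ.ord i η ∧ (η ⟨i, Set.self_mem_Iic⟩).1 ≤ α}
      < Cardinal.lift.{1} (lam i) := by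
  -- basic facts
  have hκi : κ < lam i := by
    rcases eq_or_lt_of_le (zero_le (a := i)) with h0 | h0
    · rw [← h0]; exact hκ0
    · exact hκ0.trans_le
        (hmono (Set.mem_Iio.2 ((zero_le (a := i)).trans_lt hi)) (Set.mem_Iio.2 hi) h0).le
  have hlaminf : ℵ₀ ≤ lam i := hinf i hi
  -- the small target type
  set X : Type 1 := ↥(Set.Iic i) × ↥(Set.Iic α) × ↥(Set.Iio κ.ord) with hX
  let e : X → ↥(Set.Iic i) × Ordinal × Ordinal := fun p => (p.1, p.2.1.1, p.2.2.1)
  have he : Function.Injective e := by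
    rintro ⟨a, ⟨b, hb⟩, ⟨c, hc⟩⟩ ⟨a', ⟨b', hb'⟩, ⟨c', hc'⟩⟩ h
    simp only [e, Prod.mk.injEq] at h
    obtain ⟨h1, h2, h3⟩ := h
    subst h1; subst h2; subst h3; rfl
  set T := {η : ↥(Set.Iic i) → Ordinal × Ordinal //
      LevelFn (fun j => (lam j).ord) κ.ord i η ∧ (η ⟨i, Set.self_mem_Iic⟩).1 ≤ α} with hT
  -- monotonicity in the ≤ form
  have hmle : ∀ η : ↥(Set.Iic i) → Ordinal × Ordinal,
      LevelFn (fun j => (lam j).ord) κ.ord i η →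
      ∀ j₁ j₂ : ↥(Set.Iic i), j₁ ≤ j₂ → (η j₁).1 ≤ (η j₂).1 ∧ (η j₁).2 ≤ (η j₂).2 := by
    intro η hη j₁ j₂ h
    rcases eq_or_lt_of_le h with rfl | h
    · exact ⟨le_rfl, le_rfl⟩
    · exact hη.2.1 j₁ j₂ (by exact_mod_cast h)
  -- breakpoints land in the range of e
  have hsub : ∀ η : T, Stmt8Aux.brk η.1 ⊆ Set.range e := by
    rintro ⟨η, hη, hηα⟩ ⟨j, a, b⟩ ⟨h1, -⟩
    have h1' : η j = (a, b) := h1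
    have ha : a ≤ α := by
      have h2 := (hmle η hη j ⟨i, Set.self_mem_Iic⟩ j.2).1
      rw [h1'] at h2
      exact h2.trans hηα
    have hb : b < κ.ord := by
      have h2 := (hη.1 j).2
      rw [h1'] at h2
      exact h2
    exact ⟨⟨j, ⟨a, ha⟩, ⟨b, hb⟩⟩, rfl⟩
  -- the injection into finite subsets of X
  have hfinpre : ∀ η : T, (e ⁻¹' Stmt8Aux.brk η.1).Finite := fun η =>
    Set.Finite.preimage (he.injOn) (Stmt8Aux.brk_finite η.1 η.2.1.2.2.1)
  let F : T → Finset X := fun η => (hfinpre η).toFinset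
  have hFinj : Function.Injective F := by
    intro η η' h
    have h' : e ⁻¹' Stmt8Aux.brk η.1 = e ⁻¹' Stmt8Aux.brk η'.1 := by
      rwa [Set.Finite.toFinset_inj] at h
    have hbrk : Stmt8Aux.brk η.1 = Stmt8Aux.brk η'.1 := by
      rw [← Set.image_preimage_eq_of_subset (hsub η), ← Set.image_preimage_eq_of_subset (hsub η'),
        h']
    exact Subtype.ext (Stmt8Aux.eq_of_brk_eq η.1 η'.1 (hmle η.1 η.2.1) (hmle η'.1 η'.2.1) hbrk)
  -- cardinality bounds for the factors
  have hAle : #(↥(Set.Iic i)) < Cardinal.lift.{1} (lam i) := by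
    calc #(↥(Set.Iic i)) ≤ #(↥(Set.Iio (i + 1))) := by
          apply Cardinal.mk_le_mk_of_subset
          rw [Ordinal.add_one_eq_succ, Order.Iio_succ]
      _ = Cardinal.lift.{1} (i + 1).card := Ordinal.mk_Iio_ordinal (i + 1)
      _ < Cardinal.lift.{1} (lam i) := by
          rw [Cardinal.lift_lt]
          refine lt_trans ?_ hκi
          rw [← Cardinal.lt_ord, Ordinal.add_one_eq_succ]
          exact (Cardinal.isSuccLimit_ord hκreg.aleph0_le).succ_lt hi
  have hBle : #(↥(Set.Iic α)) < Cardinal.lift.{1} (lam i) := by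
    calc #(↥(Set.Iic α)) ≤ #(↥(Set.Iio (α + 1))) := by
          apply Cardinal.mk_le_mk_of_subset
          rw [Ordinal.add_one_eq_succ, Order.Iio_succ]
      _ = Cardinal.lift.{1} (α + 1).card := Ordinal.mk_Iio_ordinal (α + 1)
      _ < Cardinal.lift.{1} (lam i) := by
          rw [Cardinal.lift_lt, ← Cardinal.lt_ord, Ordinal.add_one_eq_succ]
          exact (Cardinal.isSuccLimit_ord hlaminf).succ_lt hα
  have hCle : #(↥(Set.Iio κ.ord)) < Cardinal.lift.{1} (lam i) := by
    rw [Ordinal.mk_Iio_ordinal, Cardinal.card_ord, Cardinal.lift_lt]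
    exact hκi
  have hCinf : Infinite (↥(Set.Iio κ.ord)) := by
    rw [Cardinal.infinite_iff, Ordinal.mk_Iio_ordinal, Cardinal.card_ord,
      Cardinal.aleph0_le_lift]
    exact hκunc.le
  have hAne : Nonempty (↥(Set.Iic i)) := ⟨⟨i, Set.self_mem_Iic⟩⟩
  have hBne : Nonempty (↥(Set.Iic α)) := ⟨⟨α, Set.self_mem_Iic⟩⟩
  have hXinf : Infinite X := by
    haveI := hCinf; haveI := hAne; haveI := hBne
    infer_instance
  have hXlt : #X < Cardinal.lift.{1} (lam i) := by
    have hal : ℵ₀ ≤ Cardinal.lift.{1} (lam i) := Cardinal.aleph0_le_lift.2 hlaminf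
    rw [hX]
    simp only [Cardinal.mk_prod, Cardinal.lift_id]
    exact Cardinal.mul_lt_of_lt hal hAle (Cardinal.mul_lt_of_lt hal hBle hCle)
  calc #T ≤ #(Finset X) := Cardinal.mk_le_of_injective hFinj
    _ = #X := by haveI := hXinf; exact Cardinal.mk_finset_of_infinite X
    _ < Cardinal.lift.{1} (lam i) := hXlt
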